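/- arXiv:1401.1293 — 4 statements merged into one kernel-verified Lean document; each statement's English description precedes it below -/
import Mathlib

section
/- The S-linear map M^r → M sending (x₁,…,x_r) to x₁ restricts to an isomorphism from the kernel of ĩ − j̃ onto the kernel of i − j, and the S-linear map M^{r−1} × M′ → M′ sending (x₁,…,x_{r−1}, x′) to x′ − Σ_{s+t≤r, s,t≥1} j_{s+t}(j₀^{s−1}(x_t)) induces an isomorphism from the cokernel of ĩ − j̃ onto the cokernel of i − j. In particular, the two-term complex (M^r → M^{r−1} × M′) given by ĩ − j̃ is quasi-isomorphic to the two-term complex (M → M′) given by i − j. -/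
section

variable {S M M' : Type*} [CommRing S] [AddCommGroup M] [Module S M]
  [AddCommGroup M'] [Module S M']

/-- `ĩ(x₁,…,x_r) = (−x₂,…,−x_r, i(x₁))` with `r = m + 1`. -/
noncomputable def itilde (m : ℕ) (i : M →ₗ[S] M') :
    (Fin (m + 1) → M) →ₗ[S] (Fin m → M) × M' :=
  LinearMap.prod
    (LinearMap.pi fun s : Fin m => -LinearMap.proj s.succ)
    (i ∘ₗ LinearMap.proj 0)

/-- `j̃(x₁,…,x_r) = (−j₀(x₁),…,−j₀(x_{r−1}), Σ_{s=1}^r j_s(x_s))` with `r = m + 1`,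
where `j s` (for `s : Fin (m+1)`) denotes `j_{s+1}`. -/
noncomputable def jtilde (m : ℕ) (j₀ : M →ₗ[S] M) (j : Fin (m + 1) → M →ₗ[S] M') :
    (Fin (m + 1) → M) →ₗ[S] (Fin m → M) × M' :=
  LinearMap.prod
    (LinearMap.pi fun s : Fin m => -(j₀ ∘ₗ LinearMap.proj s.castSucc))
    (∑ s : Fin (m + 1), (j s) ∘ₗ LinearMap.proj s)

/-- `j = Σ_{s=1}^r j_s ∘ j₀^{s−1}` with `r = m + 1`. -/
noncomputable def jsum (m : ℕ) (j₀ : M →ₗ[S] M) (j : Fin (m + 1) → M →ₗ[S] M') :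
    M →ₗ[S] M' :=
  ∑ s : Fin (m + 1), (j s) ∘ₗ (j₀ ^ (s : ℕ))

/-- `(x₁,…,x_{r−1}) ↦ Σ_{s+t≤r, s,t≥1} j_{s+t}(j₀^{s−1}(x_t))` with `r = m + 1`. -/
noncomputable def corr (m : ℕ) (j₀ : M →ₗ[S] M) (j : Fin (m + 1) → M →ₗ[S] M') :
    (Fin m → M) →ₗ[S] M' :=
  ∑ t : Fin m, ∑ s : Fin (m - (t : ℕ)),
    (j ⟨(s : ℕ) + (t : ℕ) + 1, by have hs := s.isLt; have ht := t.isLt; omega⟩) ∘ₗ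
      ((j₀ ^ (s : ℕ)) ∘ₗ LinearMap.proj t)

namespace Stmt3Aux

/-- zero-padding of a finitely indexed family -/
noncomputable def pad {k : ℕ} {α : Type*} [Zero α] (v : Fin k → α) : ℕ → α :=
  fun t => if h : t < k then v ⟨t, h⟩ else 0

lemma pad_lt {k : ℕ} {α : Type*} [Zero α] (v : Fin k → α) {t : ℕ} (h : t < k) :
    pad v t = v ⟨t, h⟩ := dif_pos h

lemma pad_ge {k : ℕ} {α : Type*} [Zero α] (v : Fin k → α) {t : ℕ} (h : k ≤ t) :
    pad v t = 0 := dif_neg (by omega)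

variable (m : ℕ) (i : M →ₗ[S] M') (j₀ : M →ₗ[S] M) (j : Fin (m + 1) → M →ₗ[S] M')

lemma jsum_apply (z : M) :
    jsum m j₀ j z = ∑ a ∈ Finset.range (m + 1), pad j a ((j₀ ^ a) z) := by
  rw [jsum, LinearMap.sum_apply, ← Fin.sum_univ_eq_sum_range
    (fun a => pad j a ((j₀ ^ a) z)) (m + 1)]
  refine Finset.sum_congr rfl fun s _ => ?_
  rw [LinearMap.comp_apply, pad_lt j s.isLt, Fin.eta]

lemma sumj_apply (x : Fin (m + 1) → M) :
    ∑ s : Fin (m + 1), j s (x s) = ∑ s ∈ Finset.range (m + 1), pad j s (pad x s) := by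
  rw [← Fin.sum_univ_eq_sum_range (fun s => pad j s (pad x s)) (m + 1)]
  refine Finset.sum_congr rfl fun s _ => ?_
  rw [pad_lt j s.isLt, pad_lt x s.isLt, Fin.eta]

lemma corr_apply (y : Fin m → M) :
    corr m j₀ j y = ∑ t ∈ Finset.range m, ∑ b ∈ Finset.range (m - t),
      pad j (b + t + 1) ((j₀ ^ b) (pad y t)) := by
  rw [corr, LinearMap.sum_apply,
    ← Fin.sum_univ_eq_sum_range
      (fun t => ∑ b ∈ Finset.range (m - t), pad j (b + t + 1) ((j₀ ^ b) (pad y t))) m]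
  refine Finset.sum_congr rfl fun t _ => ?_
  rw [LinearMap.sum_apply,
    ← Fin.sum_univ_eq_sum_range (fun b => pad j (b + (t : ℕ) + 1) ((j₀ ^ b) (pad y t))) _]
  refine Finset.sum_congr rfl fun b _ => ?_
  rw [LinearMap.comp_apply, LinearMap.comp_apply, LinearMap.proj_apply,
    pad_lt j (by have := b.isLt; have := t.isLt; omega), pad_lt y t.isLt, Fin.eta]

lemma keyA (x : Fin (m + 1) → M) :
    corr m j₀ j (fun s : Fin m => j₀ (x s.castSucc) - x s.succ)
      = jsum m j₀ j (x 0) - ∑ s : Fin (m + 1), j s (x s) := by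
  classical
  set g : ℕ → M' := fun t => ∑ b ∈ Finset.range (m+1), pad j (b + t) ((j₀ ^ b) (pad x t))
    with hg
  have hX0 : pad x 0 = x 0 := by rw [pad_lt x (Nat.succ_pos m), Fin.mk_zero]
  have e2 : ∀ t, ∑ b ∈ Finset.range (m+1), pad j (b + t + 1) ((j₀ ^ (b + 1)) (pad x t))
      = g t - pad j t (pad x t) := by
    intro t
    have key := Finset.sum_range_succ' (fun b => pad j (b + t) ((j₀ ^ b) (pad x t))) (m+1)
    rw [Finset.sum_range_succ (fun b => pad j (b + t) ((j₀ ^ b) (pad x t))) (m+1)] at key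
    have hfn : pad j ((m+1) + t) ((j₀ ^ (m+1)) (pad x t)) = 0 := by
      rw [pad_ge j (by omega)]; rfl
    have hf0 : pad j (0 + t) ((j₀ ^ 0) (pad x t)) = pad j t (pad x t) := by
      rw [Nat.zero_add, pow_zero, Module.End.one_apply]
    rw [hfn, hf0, add_zero] at key
    calc ∑ b ∈ Finset.range (m+1), pad j (b + t + 1) ((j₀ ^ (b + 1)) (pad x t))
        = ∑ b ∈ Finset.range (m+1), pad j ((b + 1) + t) ((j₀ ^ (b + 1)) (pad x t)) :=
          Finset.sum_congr rfl fun b _ => by rw [show b + t + 1 = b + 1 + t by omega]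
      _ = g t - pad j t (pad x t) := eq_sub_of_add_eq key.symm
  have e3 : ∑ t ∈ Finset.range (m+1), g (t + 1) = (∑ t ∈ Finset.range (m+1), g t) - g 0 := by
    have key := Finset.sum_range_succ' g (m+1)
    rw [Finset.sum_range_succ g (m+1)] at key
    have hgn : g (m+1) = 0 := Finset.sum_eq_zero fun b _ => by
      rw [pad_ge j (by omega)]; rfl
    rw [hgn, add_zero] at key
    exact eq_sub_of_add_eq key.symm
  calc corr m j₀ j (fun s : Fin m => j₀ (x s.castSucc) - x s.succ)
      = ∑ t ∈ Finset.range (m+1), ∑ b ∈ Finset.range (m+1),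
          pad j (b + t + 1) ((j₀ ^ b) (j₀ (pad x t) - pad x (t + 1))) := by
        rw [corr_apply]
        rw [Finset.sum_subset (Finset.range_subset_range.2 (Nat.le_succ m))
          (fun t _ ht => by
            rw [Finset.mem_range, not_lt] at ht
            have h0 : m - t = 0 := by omega
            rw [h0]; simp)]
        refine Finset.sum_congr rfl fun t ht => ?_
        rw [Finset.mem_range] at ht
        rw [Finset.sum_subset (Finset.range_subset_range.2 (by omega : m - t ≤ m+1))
          (fun b _ hb => by
            rw [Finset.mem_range, not_lt] at hb
            rw [pad_ge j (by omega), LinearMap.zero_apply])]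
        refine Finset.sum_congr rfl fun b _ => ?_
        rcases Nat.lt_or_ge t m with h | h
        · have hy : pad (fun s : Fin m => j₀ (x s.castSucc) - x s.succ) t
              = j₀ (pad x t) - pad x (t + 1) := by
            rw [pad_lt _ h, pad_lt x (by omega : t < m + 1),
              pad_lt x (by omega : t + 1 < m + 1)]
            rfl
          rw [hy]
        · rw [pad_ge j (by omega : m + 1 ≤ b + t + 1), LinearMap.zero_apply,
            LinearMap.zero_apply]
    _ = ∑ t ∈ Finset.range (m+1), ((g t - pad j t (pad x t)) - g (t + 1)) := by
        refine Finset.sum_congr rfl fun t _ => ?_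
        have split : ∀ b, pad j (b + t + 1) ((j₀ ^ b) (j₀ (pad x t) - pad x (t + 1)))
            = pad j (b + t + 1) ((j₀ ^ (b + 1)) (pad x t))
              - pad j (b + t + 1) ((j₀ ^ b) (pad x (t + 1))) := by
          intro b
          rw [map_sub, map_sub, pow_succ, Module.End.mul_apply]
        rw [Finset.sum_congr rfl fun b _ => split b, Finset.sum_sub_distrib, e2 t]
        congr 1
    _ = jsum m j₀ j (x 0) - ∑ s : Fin (m + 1), j s (x s) := by
        rw [Finset.sum_sub_distrib, Finset.sum_sub_distrib, e3]
        have hg0 : g 0 = jsum m j₀ j (x 0) := by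
          rw [jsum_apply]
          refine Finset.sum_congr rfl fun b _ => ?_
          simp only [Nat.add_zero]
          rw [hX0]
        have hs : ∑ t ∈ Finset.range (m+1), pad j t (pad x t)
            = ∑ s : Fin (m + 1), j s (x s) := (sumj_apply m j x).symm
        rw [hg0, hs]
        abel

lemma D_apply (x : Fin (m + 1) → M) :
    (itilde m i - jtilde m j₀ j) x =
      (fun s : Fin m => j₀ (x s.castSucc) - x s.succ,
        i (x 0) - ∑ s : Fin (m + 1), j s (x s)) := by
  have h1 : ((itilde m i - jtilde m j₀ j) x).1 = fun s : Fin m => j₀ (x s.castSucc) - x s.succ := by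
    funext s
    simp only [itilde, jtilde, LinearMap.sub_apply, LinearMap.prod_apply, Function.prod,
      Prod.fst_sub, Pi.sub_apply, LinearMap.pi_apply, LinearMap.neg_apply,
      LinearMap.proj_apply, LinearMap.comp_apply]
    abel
  have h2 : ((itilde m i - jtilde m j₀ j) x).2 = i (x 0) - ∑ s : Fin (m + 1), j s (x s) := by
    simp only [itilde, jtilde, LinearMap.sub_apply, LinearMap.prod_apply, Function.prod,
      Prod.snd_sub, LinearMap.sum_apply, LinearMap.comp_apply, LinearMap.proj_apply]
  exact Prod.ext h1 h2

lemma keyB (x0 : M) :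
    (itilde m i - jtilde m j₀ j) (fun s : Fin (m + 1) => (j₀ ^ (s : ℕ)) x0)
      = (0, (i - jsum m j₀ j) x0) := by
  rw [D_apply]
  refine Prod.ext ?_ ?_
  · funext s
    simp only [Fin.coe_castSucc, Fin.val_succ, pow_succ', Module.End.mul_apply, sub_self,
      Pi.zero_apply]
  · simp only [Fin.val_zero, pow_zero, Module.End.one_apply, LinearMap.sub_apply, jsum,
      LinearMap.sum_apply, LinearMap.comp_apply]

lemma keyC (y : Fin m → M) :
    (itilde m i - jtilde m j₀ j)
        (fun t : Fin (m + 1) => -∑ a ∈ Finset.range (t : ℕ), (j₀ ^ ((t : ℕ) - 1 - a)) (pad y a))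
      = (y, corr m j₀ j y) := by
  classical
  rw [D_apply]
  refine Prod.ext ?_ ?_
  · funext s
    simp only [Fin.coe_castSucc, Fin.val_succ]
    rw [Finset.sum_range_succ, map_neg, map_sum]
    have h1 : ∀ a ∈ Finset.range (s : ℕ), j₀ ((j₀ ^ ((s : ℕ) - 1 - a)) (pad y a))
        = (j₀ ^ ((s : ℕ) - a)) (pad y a) := by
      intro a ha
      rw [Finset.mem_range] at ha
      rw [show (s : ℕ) - a = ((s : ℕ) - 1 - a) + 1 by omega, pow_succ', Module.End.mul_apply]
    rw [Finset.sum_congr rfl h1]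
    have h2 : ∀ a ∈ Finset.range (s : ℕ), (j₀ ^ ((s : ℕ) + 1 - 1 - a)) (pad y a)
        = (j₀ ^ ((s : ℕ) - a)) (pad y a) := by
      intro a _
      rw [show (s : ℕ) + 1 - 1 - a = (s : ℕ) - a by omega]
    rw [Finset.sum_congr rfl h2]
    rw [show (s : ℕ) + 1 - 1 - (s : ℕ) = 0 by omega, pow_zero, Module.End.one_apply,
      pad_lt y s.isLt, Fin.eta]
    abel
  · have h0 : ((0 : Fin (m + 1)) : ℕ) = 0 := rfl
    rw [h0]
    simp only [Finset.range_zero, Finset.sum_empty, neg_zero, map_zero, zero_sub,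
      map_neg, Finset.sum_neg_distrib, neg_inj]
    have step1 : ∑ s : Fin (m + 1), j s (∑ a ∈ Finset.range (s : ℕ),
          (j₀ ^ ((s : ℕ) - 1 - a)) (pad y a))
        = ∑ s ∈ Finset.range (m + 1), ∑ a ∈ Finset.range s,
            pad j s ((j₀ ^ (s - 1 - a)) (pad y a)) := by
      rw [← Fin.sum_univ_eq_sum_range (fun s => ∑ a ∈ Finset.range s,
        pad j s ((j₀ ^ (s - 1 - a)) (pad y a))) (m + 1)]
      refine Finset.sum_congr rfl fun s _ => ?_
      rw [map_sum]
      refine Finset.sum_congr rfl fun a _ => ?_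
      rw [pad_lt j s.isLt, Fin.eta]
    rw [step1, corr_apply]
    have L : (∑ s ∈ Finset.range (m + 1), ∑ a ∈ Finset.range s,
          pad j s ((j₀ ^ (s - 1 - a)) (pad y a)))
        = ∑ p ∈ (Finset.range (m + 1)).sigma (fun s => Finset.range s),
            pad j p.1 ((j₀ ^ (p.1 - 1 - p.2)) (pad y p.2)) :=
      Finset.sum_sigma' _ _ _
    have R : (∑ t ∈ Finset.range m, ∑ b ∈ Finset.range (m - t),
          pad j (b + t + 1) ((j₀ ^ b) (pad y t)))
        = ∑ p ∈ (Finset.range m).sigma (fun t => Finset.range (m - t)),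
            pad j (p.2 + p.1 + 1) ((j₀ ^ p.2) (pad y p.1)) :=
      Finset.sum_sigma' _ _ _
    rw [L, R, neg_neg]
    symm
    refine Finset.sum_bij' (ι := Sigma fun _ : ℕ => ℕ) (κ := Sigma fun _ : ℕ => ℕ)
      (fun p _ => Sigma.mk (p.2 + p.1 + 1) p.1)
      (fun q _ => Sigma.mk q.2 (q.1 - 1 - q.2)) ?_ ?_ ?_ ?_ ?_
    · rintro ⟨t, b⟩ hp
      simp only [Finset.mem_sigma, Finset.mem_range] at hp ⊢
      omega
    · rintro ⟨sN, a⟩ hq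
      simp only [Finset.mem_sigma, Finset.mem_range] at hq ⊢
      omega
    · rintro ⟨t, b⟩ hp
      simp only [Finset.mem_sigma, Finset.mem_range] at hp
      dsimp only
      rw [show b + t + 1 - 1 - t = b by omega]
    · rintro ⟨sN, a⟩ hq
      simp only [Finset.mem_sigma, Finset.mem_range] at hq
      dsimp only
      rw [show sN - 1 - a + a + 1 = sN by omega]
    · rintro ⟨t, b⟩ hp
      simp only [Finset.mem_sigma, Finset.mem_range] at hp
      dsimp only
      rw [show b + t + 1 - 1 - t = b by omega]

lemma ker_elem (x : Fin (m + 1) → M) (hx : x ∈ LinearMap.ker (itilde m i - jtilde m j₀ j)) :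
    (∀ t : Fin (m + 1), x t = (j₀ ^ (t : ℕ)) (x 0)) ∧ (i - jsum m j₀ j) (x 0) = 0 := by
  rw [LinearMap.mem_ker, D_apply] at hx
  have h1 := congrArg Prod.fst hx
  have h2 := congrArg Prod.snd hx
  simp only [Prod.fst_zero, Prod.snd_zero] at h1 h2
  have hstep : ∀ s : Fin m, j₀ (x s.castSucc) = x s.succ := by
    intro s
    have hs := congrFun h1 s
    simp only [Pi.zero_apply] at hs
    rwa [sub_eq_zero] at hs
  have key : ∀ k (hk : k < m + 1), x ⟨k, hk⟩ = (j₀ ^ k) (x 0) := by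
    intro k
    induction k with
    | zero =>
      intro hk
      rw [pow_zero, Module.End.one_apply, Fin.mk_zero]
    | succ k ih =>
      intro hk
      have hkm : k < m := by omega
      have hs := hstep ⟨k, hkm⟩
      have hc : (⟨k, hkm⟩ : Fin m).castSucc = (⟨k, by omega⟩ : Fin (m + 1)) := rfl
      have hsu : (⟨k, hkm⟩ : Fin m).succ = (⟨k + 1, hk⟩ : Fin (m + 1)) := rfl
      rw [hc, hsu] at hs
      rw [← hs, ih (by omega), pow_succ', Module.End.mul_apply]
  have hAll : ∀ t : Fin (m + 1), x t = (j₀ ^ (t : ℕ)) (x 0) := by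
    intro t
    have := key t t.isLt
    rwa [Fin.eta] at this
  refine ⟨hAll, ?_⟩
  rw [LinearMap.sub_apply, jsum, LinearMap.sum_apply]
  simp only [LinearMap.comp_apply]
  rw [Finset.sum_congr rfl fun s _ => (congrArg (j s) (hAll s)).symm]
  exact h2

end Stmt3Aux

/-- the projection to the first coordinate restricts to an isomorphism
`ker (ĩ − j̃) ≃ ker (i − j)`, and the map `(x₁,…,x_{r−1},x′) ↦
x′ − Σ_{s+t≤r, s,t≥1} j_{s+t}(j₀^{s−1}(x_t))` induces an isomorphism
`coker (ĩ − j̃) ≃ coker (i − j)`; in particular the two-term complex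
`ĩ − j̃ : M^r → M^{r−1} × M′` is quasi-isomorphic to the two-term complex
`i − j : M → M′` (here `r = m + 1 ≥ 1` and `j = Σ_{s=1}^r j_s ∘ j₀^{s−1}`). -/
theorem stmt_3 (m : ℕ) (i : M →ₗ[S] M') (j₀ : M →ₗ[S] M)
    (j : Fin (m + 1) → M →ₗ[S] M') :
    (∃ e : LinearMap.ker (itilde m i - jtilde m j₀ j) ≃ₗ[S]
        LinearMap.ker (i - jsum m j₀ j),
        ∀ x : LinearMap.ker (itilde m i - jtilde m j₀ j),
          (e x : M) = (x : Fin (m + 1) → M) 0) ∧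
    (∃ e : (((Fin m → M) × M') ⧸ LinearMap.range (itilde m i - jtilde m j₀ j)) ≃ₗ[S]
        (M' ⧸ LinearMap.range (i - jsum m j₀ j)),
        ∀ y : (Fin m → M) × M',
          e (Submodule.Quotient.mk y) = Submodule.Quotient.mk (y.2 - corr m j₀ j y.1)) := by
  classical
  constructor
  · -- kernel part
    have hf : ∀ c : LinearMap.ker (itilde m i - jtilde m j₀ j),
        ((LinearMap.proj (0 : Fin (m + 1)) : (Fin (m + 1) → M) →ₗ[S] M) ∘ₗ
          (LinearMap.ker (itilde m i - jtilde m j₀ j)).subtype) c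
          ∈ LinearMap.ker (i - jsum m j₀ j) := by
      intro c
      rw [LinearMap.mem_ker]
      exact (Stmt3Aux.ker_elem m i j₀ j _ c.2).2
    have hg : ∀ c : LinearMap.ker (i - jsum m j₀ j),
        ((LinearMap.pi fun s : Fin (m + 1) => (j₀ ^ (s : ℕ))) ∘ₗ
          (LinearMap.ker (i - jsum m j₀ j)).subtype) c
          ∈ LinearMap.ker (itilde m i - jtilde m j₀ j) := by
      intro c
      rw [LinearMap.mem_ker]
      have hc : ((LinearMap.pi fun s : Fin (m + 1) => (j₀ ^ (s : ℕ))) ∘ₗ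
          (LinearMap.ker (i - jsum m j₀ j)).subtype) c
          = fun s : Fin (m + 1) => (j₀ ^ (s : ℕ)) (c : M) := rfl
      rw [hc, Stmt3Aux.keyB m i j₀ j (c : M)]
      have hc2 : (i - jsum m j₀ j) (c : M) = 0 := c.2
      rw [hc2]
      rfl
    set F : LinearMap.ker (itilde m i - jtilde m j₀ j) →ₗ[S]
        LinearMap.ker (i - jsum m j₀ j) :=
      LinearMap.codRestrict _ _ hf with hF
    set G : LinearMap.ker (i - jsum m j₀ j) →ₗ[S]
        LinearMap.ker (itilde m i - jtilde m j₀ j) :=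
      LinearMap.codRestrict _ _ hg with hG
    refine ⟨LinearEquiv.ofLinear F G ?_ ?_, fun x => rfl⟩
    · refine LinearMap.ext fun c => Subtype.ext ?_
      show ((LinearMap.proj (0 : Fin (m + 1)) : (Fin (m + 1) → M) →ₗ[S] M))
        (fun s : Fin (m + 1) => (j₀ ^ (s : ℕ)) (c : M)) = (c : M)
      simp [LinearMap.proj_apply]
    · refine LinearMap.ext fun c => Subtype.ext ?_
      show (fun s : Fin (m + 1) => (j₀ ^ (s : ℕ)) ((c : Fin (m + 1) → M) 0))
        = (c : Fin (m + 1) → M)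
      funext t
      exact ((Stmt3Aux.ker_elem m i j₀ j _ c.2).1 t).symm
  · -- cokernel part
    set π : (Fin m → M) × M' →ₗ[S] M' :=
      LinearMap.snd S (Fin m → M) M' - (corr m j₀ j) ∘ₗ LinearMap.fst S (Fin m → M) M'
      with hπ
    have hπ_apply : ∀ p : (Fin m → M) × M', π p = p.2 - corr m j₀ j p.1 := by
      intro p
      simp [hπ, LinearMap.sub_apply, LinearMap.snd_apply, LinearMap.comp_apply,
        LinearMap.fst_apply]
    have hπA : ∀ x : Fin (m + 1) → M,
        π ((itilde m i - jtilde m j₀ j) x) = (i - jsum m j₀ j) (x 0) := by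
      intro x
      rw [hπ_apply, Stmt3Aux.D_apply m i j₀ j x]
      show (i (x 0) - ∑ s : Fin (m + 1), j s (x s))
          - corr m j₀ j (fun s : Fin m => j₀ (x s.castSucc) - x s.succ) = _
      rw [Stmt3Aux.keyA m j₀ j x, LinearMap.sub_apply]
      abel
    have hle1 : LinearMap.range (itilde m i - jtilde m j₀ j) ≤
        LinearMap.ker ((LinearMap.range (i - jsum m j₀ j)).mkQ ∘ₗ π) := by
      rintro _ ⟨x, rfl⟩
      rw [LinearMap.mem_ker, LinearMap.comp_apply, hπA, Submodule.mkQ_apply,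
        Submodule.Quotient.mk_eq_zero]
      exact ⟨x 0, rfl⟩
    have hle2 : LinearMap.range (i - jsum m j₀ j) ≤
        LinearMap.ker ((LinearMap.range (itilde m i - jtilde m j₀ j)).mkQ ∘ₗ
          LinearMap.inr S (Fin m → M) M') := by
      rintro _ ⟨x0, rfl⟩
      rw [LinearMap.mem_ker, LinearMap.comp_apply, LinearMap.inr_apply,
        Submodule.mkQ_apply, Submodule.Quotient.mk_eq_zero]
      exact ⟨fun s : Fin (m + 1) => (j₀ ^ (s : ℕ)) x0, Stmt3Aux.keyB m i j₀ j x0⟩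
    set eF := Submodule.liftQ _ ((LinearMap.range (i - jsum m j₀ j)).mkQ ∘ₗ π) hle1
      with heF
    set eB := Submodule.liftQ _ ((LinearMap.range (itilde m i - jtilde m j₀ j)).mkQ ∘ₗ
        LinearMap.inr S (Fin m → M) M') hle2 with heB
    refine ⟨LinearEquiv.ofLinear eF eB ?_ ?_, ?_⟩
    · refine Submodule.linearMap_qext _ (LinearMap.ext fun x' => ?_)
      simp only [LinearMap.comp_apply, Submodule.mkQ_apply, heF, heB,
        Submodule.liftQ_apply, LinearMap.inr_apply, LinearMap.id_apply, LinearMap.id_comp]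
      rw [hπ_apply]
      simp
    · refine Submodule.linearMap_qext _ (LinearMap.ext fun p => ?_)
      simp only [LinearMap.comp_apply, Submodule.mkQ_apply, heF, heB,
        Submodule.liftQ_apply, LinearMap.inr_apply, LinearMap.id_apply, LinearMap.id_comp]
      rw [Submodule.Quotient.eq]
      have hmem : ((p.1, corr m j₀ j p.1) : (Fin m → M) × M') ∈
          LinearMap.range (itilde m i - jtilde m j₀ j) :=
        ⟨_, Stmt3Aux.keyC m i j₀ j p.1⟩
      have hneg := neg_mem hmem
      have heq : ((0 : Fin m → M), π p) - p = -((p.1, corr m j₀ j p.1)) := by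
        refine Prod.ext ?_ ?_
        · show (0 : Fin m → M) - p.1 = -p.1
          rw [zero_sub]
        · show π p - p.2 = -(corr m j₀ j p.1)
          rw [hπ_apply]
          abel
      rw [heq]
      exact hneg
    · intro y
      show eF (Submodule.Quotient.mk y) = _
      rw [heF, Submodule.liftQ_apply, LinearMap.comp_apply, Submodule.mkQ_apply, hπ_apply]

end
end

section
/- The maps φ₁ and φ₂ are bijective, and the identity (id_{M^{r−1}} × (i − j)) ∘ φ₁ = φ₂ ∘ (ĩ − j̃) holds as maps from M^r to M^{r−1} × M′. -/
section

variable {S M M' : Type*} [CommRing S] [AddCommGroup M] [Module S M]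
  [AddCommGroup M'] [Module S M']

/-- `φ₁(x₁,…,x_r) = (j₀(x₁)−x₂, …, j₀(x_{r−1})−x_r, x₁)` with `r = m + 1`. -/
noncomputable def phi1 (m : ℕ) (j₀ : M →ₗ[S] M) :
    (Fin (m + 1) → M) →ₗ[S] (Fin (m + 1) → M) :=
  LinearMap.pi fun s : Fin (m + 1) =>
    Fin.lastCases (motive := fun _ => (Fin (m + 1) → M) →ₗ[S] M) (LinearMap.proj 0)
      (fun t : Fin m => (j₀ ∘ₗ LinearMap.proj t.castSucc) - (LinearMap.proj t.succ : (Fin (m + 1) → M) →ₗ[S] M)) s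

/-- `φ₂(x₁,…,x_{r−1},x′) = (x₁,…,x_{r−1}, x′ − Σ_{s+t≤r, s,t≥1} j_{s+t}(j₀^{s−1}(x_t)))`. -/
noncomputable def phi2 (m : ℕ) (j₀ : M →ₗ[S] M) (j : Fin (m + 1) → M →ₗ[S] M') :
    (Fin m → M) × M' →ₗ[S] (Fin m → M) × M' :=
  LinearMap.prod
    (LinearMap.fst S (Fin m → M) M')
    (LinearMap.snd S (Fin m → M) M' - (corr m j₀ j) ∘ₗ LinearMap.fst S (Fin m → M) M')

/-- `id_{M^{r−1}} × g : M^r → M^{r−1} × M′`, `(x₁,…,x_r) ↦ (x₁,…,x_{r−1}, g(x_r))`. -/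
noncomputable def idOplus (m : ℕ) (g : M →ₗ[S] M') :
    (Fin (m + 1) → M) →ₗ[S] (Fin m → M) × M' :=
  LinearMap.prod
    (LinearMap.pi fun t : Fin m => LinearMap.proj t.castSucc)
    (g ∘ₗ LinearMap.proj (Fin.last m))


private lemma nat_key_stmt4 {A : Type*} [AddCommGroup A] (G : ℕ → ℕ → A) (m : ℕ) :
    ∑ a ∈ Finset.range (m+1), G a 0 =
      (∑ b ∈ Finset.range (m+1), G 0 b) +
        ∑ t ∈ Finset.range m, ∑ s ∈ Finset.range (m - t), (G (s+1) t - G s (t+1)) := by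
  induction m with
  | zero => simp
  | succ m ih =>
    rw [Finset.sum_range_succ (f := fun a => G a 0) (n := m+1), ih,
      Finset.sum_range_succ (f := fun b => G 0 b) (n := m+1),
      Finset.sum_range_succ (n := m)
        (f := fun t => ∑ s ∈ Finset.range (m + 1 - t), (G (s+1) t - G s (t+1)))]
    have h1 : ∀ t ∈ Finset.range m,
        (∑ s ∈ Finset.range (m + 1 - t), (G (s+1) t - G s (t+1)))
          = (∑ s ∈ Finset.range (m - t), (G (s+1) t - G s (t+1)))
            + (G (m - t + 1) t - G (m - t) (t+1)) := by
      intro t ht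
      simp only [Finset.mem_range] at ht
      have : m + 1 - t = (m - t) + 1 := by omega
      rw [this, Finset.sum_range_succ]
    rw [Finset.sum_congr rfl h1, Finset.sum_add_distrib]
    have h2 : (∑ t ∈ Finset.range m, (G (m - t + 1) t - G (m - t) (t+1)))
        = G (m + 1) 0 - G 1 m := by
      have h3 : ∀ t ∈ Finset.range m,
          (G (m - t + 1) t - G (m - t) (t+1))
            = ((fun t => G (m + 1 - t) t) t - (fun t => G (m + 1 - t) t) (t+1)) := by
        intro t ht
        simp only [Finset.mem_range] at ht
        have e1 : m - t + 1 = m + 1 - t := by omega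
        have e2 : m - t = m + 1 - (t + 1) := by omega
        rw [e1, e2]
      rw [Finset.sum_congr rfl h3, Finset.sum_range_sub' (fun t => G (m + 1 - t) t)]
      simp
    rw [h2]
    simp only [Nat.add_sub_cancel_left, Finset.sum_range_one]
    abel

private lemma fin_key_stmt4 (m : ℕ) (j₀ : M →ₗ[S] M) (j : Fin (m + 1) → M →ₗ[S] M')
    (x : Fin (m + 1) → M) :
    ∑ s : Fin (m + 1), j s ((j₀ ^ (s : ℕ)) (x 0)) =
      (∑ s : Fin (m + 1), j s (x s)) +
        ∑ t : Fin m, ∑ s : Fin (m - (t : ℕ)),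
          (j ⟨(s : ℕ) + (t : ℕ) + 1, by have hs := s.isLt; have ht := t.isLt; omega⟩)
            ((j₀ ^ (s : ℕ)) (j₀ (x t.castSucc) - x t.succ)) := by
  classical
  set J : ℕ → M →ₗ[S] M' := fun n => if h : n < m + 1 then j ⟨n, h⟩ else 0 with hJ
  set X : ℕ → M := fun b => if h : b < m + 1 then x ⟨b, h⟩ else 0 with hX
  set G : ℕ → ℕ → M' := fun a b => (J (a + b)) ((j₀ ^ a) (X b)) with hG
  have hx0 : X 0 = x 0 := by simp [hX]
  have L0 : ∑ s : Fin (m + 1), j s ((j₀ ^ (s : ℕ)) (x 0))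
      = ∑ a ∈ Finset.range (m+1), G a 0 := by
    rw [← Fin.sum_univ_eq_sum_range (fun a => G a 0)]
    refine Finset.sum_congr rfl fun s _ => ?_
    simp [hG, hJ, hx0, s.isLt, Nat.lt_succ_iff.mp s.isLt]
  have L1 : ∑ s : Fin (m + 1), j s (x s) = ∑ b ∈ Finset.range (m+1), G 0 b := by
    rw [← Fin.sum_univ_eq_sum_range (fun b => G 0 b)]
    refine Finset.sum_congr rfl fun s _ => ?_
    simp [hG, hJ, hX, s.isLt, Nat.lt_succ_iff.mp s.isLt]
  have L2 : (∑ t : Fin m, ∑ s : Fin (m - (t : ℕ)),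
        (j ⟨(s : ℕ) + (t : ℕ) + 1, by have hs := s.isLt; have ht := t.isLt; omega⟩)
          ((j₀ ^ (s : ℕ)) (j₀ (x t.castSucc) - x t.succ)))
      = ∑ t ∈ Finset.range m, ∑ s ∈ Finset.range (m - t), (G (s+1) t - G s (t+1)) := by
    rw [← Fin.sum_univ_eq_sum_range
      (fun t => ∑ s ∈ Finset.range (m - t), (G (s+1) t - G s (t+1)))]
    refine Finset.sum_congr rfl fun t _ => ?_
    rw [← Fin.sum_univ_eq_sum_range (fun s => (G (s+1) (t:ℕ) - G s ((t:ℕ)+1)))]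
    refine Finset.sum_congr rfl fun s _ => ?_
    have hs : (s : ℕ) < m - (t : ℕ) := s.isLt
    have ht : (t : ℕ) < m := t.isLt
    have h1 : (s : ℕ) + 1 + (t : ℕ) < m + 1 := by omega
    have h2 : (s : ℕ) + ((t : ℕ) + 1) < m + 1 := by omega
    have hcs : ((t : ℕ) : ℕ) < m + 1 := by omega
    have hsu : ((t : ℕ) + 1) < m + 1 := by omega
    simp only [hG, hJ, hX, dif_pos h1, dif_pos h2, dif_pos hcs, dif_pos hsu]
    have e1 : j ⟨(s:ℕ) + 1 + (t:ℕ), h1⟩ = j ⟨(s:ℕ) + (t:ℕ) + 1, by omega⟩ := by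
      simp only [show (s:ℕ) + 1 + (t:ℕ) = (s:ℕ) + (t:ℕ) + 1 from by omega]
    have e2 : j ⟨(s:ℕ) + ((t:ℕ) + 1), h2⟩ = j ⟨(s:ℕ) + (t:ℕ) + 1, by omega⟩ := by
      simp only [show (s:ℕ) + ((t:ℕ) + 1) = (s:ℕ) + (t:ℕ) + 1 from by omega]
    have e3 : x ⟨(t:ℕ), hcs⟩ = x t.castSucc := by congr 1
    have e4 : x ⟨(t:ℕ) + 1, hsu⟩ = x t.succ := by congr 1
    rw [e1, e2, e3, e4]
    simp [map_sub, pow_succ, Module.End.mul_apply]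
  rw [L0, L1, L2, nat_key_stmt4]

/-- `φ₁` and `φ₂` are bijective and
`(id_{M^{r−1}} × (i − j)) ∘ φ₁ = φ₂ ∘ (ĩ − j̃)` (here `r = m + 1 ≥ 1` and
`j = Σ_{s=1}^r j_s ∘ j₀^{s−1}`). -/
theorem stmt_4 (m : ℕ) (i : M →ₗ[S] M') (j₀ : M →ₗ[S] M)
    (j : Fin (m + 1) → M →ₗ[S] M') :
    Function.Bijective (phi1 m j₀) ∧ Function.Bijective (phi2 m j₀ j) ∧
      (idOplus m (i - jsum m j₀ j)) ∘ₗ phi1 m j₀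
        = (phi2 m j₀ j) ∘ₗ (itilde m i - jtilde m j₀ j) := by
  refine ⟨?_, ?_, ?_⟩
  · rw [Function.bijective_iff_has_inverse]
    refine ⟨fun y k => Fin.induction (y (Fin.last m)) (fun t ih => j₀ ih - y t.castSucc) k,
      ?_, ?_⟩
    · intro x
      funext k
      induction k using Fin.induction with
      | zero =>
        simp [phi1, Fin.lastCases_last]
      | succ t ihh =>
        beta_reduce
        beta_reduce at ihh
        rw [Fin.induction_succ, ihh]
        simp [phi1, Fin.lastCases_castSucc]
    · intro y
      funext k
      induction k using Fin.lastCases with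
      | last => simp [phi1, Fin.lastCases_last]
      | cast t =>
        simp only [phi1, LinearMap.pi_apply, Fin.lastCases_castSucc, LinearMap.sub_apply,
          LinearMap.comp_apply, LinearMap.proj_apply, Fin.induction_succ]
        abel
  · rw [Function.bijective_iff_has_inverse]
    refine ⟨fun p => (p.1, p.2 + corr m j₀ j p.1), ?_, ?_⟩ <;> intro p <;>
      simp [phi2, LinearMap.prod_apply, Prod.ext_iff] <;> abel
  · apply LinearMap.ext
    intro x
    have hfst : ((itilde m i) x).1 - ((jtilde m j₀ j) x).1
        = fun t : Fin m => j₀ (x t.castSucc) - x t.succ := by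
      funext t
      simp only [itilde, jtilde, LinearMap.prod_apply, Function.prod, Pi.sub_apply,
        LinearMap.pi_apply, LinearMap.neg_apply, LinearMap.comp_apply, LinearMap.proj_apply]
      abel
    refine Prod.ext ?_ ?_
    · simp only [LinearMap.comp_apply, idOplus, phi2, LinearMap.prod_apply, Function.prod,
        LinearMap.sub_apply, LinearMap.fst_apply, Prod.fst_sub, hfst]
      funext t
      simp [phi1, Fin.lastCases_castSucc]
    · simp only [LinearMap.comp_apply, idOplus, phi2, LinearMap.prod_apply, Function.prod,
        LinearMap.sub_apply, LinearMap.snd_apply, LinearMap.fst_apply, LinearMap.proj_apply,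
        Prod.fst_sub, Prod.snd_sub, hfst]
      have hlast : (phi1 m j₀) x (Fin.last m) = x 0 := by
        simp [phi1, Fin.lastCases_last]
      rw [hlast]
      have hsnd : ((itilde m i) x).2 - ((jtilde m j₀ j) x).2
          = i (x 0) - ∑ s : Fin (m + 1), j s (x s) := by
        simp [itilde, jtilde, LinearMap.sum_apply]
      rw [hsnd]
      have hcorr : (corr m j₀ j) (fun t : Fin m => j₀ (x t.castSucc) - x t.succ)
          = ∑ t : Fin m, ∑ s : Fin (m - (t : ℕ)),
            (j ⟨(s : ℕ) + (t : ℕ) + 1, by have hs := s.isLt; have ht := t.isLt; omega⟩)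
              ((j₀ ^ (s : ℕ)) (j₀ (x t.castSucc) - x t.succ)) := by
        simp [corr, LinearMap.sum_apply]
      rw [hcorr]
      have hjsum : (jsum m j₀ j) (x 0) = ∑ s : Fin (m + 1), j s ((j₀ ^ (s : ℕ)) (x 0)) := by
        simp [jsum, LinearMap.sum_apply]
      rw [hjsum, fin_key_stmt4 m j₀ j x]
      abel


end
end

section
/- The map ĩ : M^r → M^{r−1} × M′ is an isomorphism, and det_S(id_{M^r} − ĩ⁻¹ ∘ j̃) = det_S(id_M − i⁻¹ ∘ j), where j = Σ_{s=1}^r j_s ∘ j₀^{s−1}. -/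
section

variable {S M M' : Type*} [CommRing S] [AddCommGroup M] [Module S M]
  [AddCommGroup M'] [Module S M'] [Module.Free S M] [Module.Finite S M]
  [Module.Free S M'] [Module.Finite S M']

set_option linter.unusedSectionVars false

/-- Weinstein–Aronszajn for linear maps. -/
lemma det_id_sub_comp_comm (f : M →ₗ[S] M') (g : M' →ₗ[S] M) :
    LinearMap.det (LinearMap.id - g ∘ₗ f) = LinearMap.det (LinearMap.id - f ∘ₗ g) := by
  classical
  let bM := Module.Free.chooseBasis S M
  let bM' := Module.Free.chooseBasis S M'
  rw [← LinearMap.det_toMatrix bM, ← LinearMap.det_toMatrix bM', map_sub, map_sub,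
    LinearMap.toMatrix_id, LinearMap.toMatrix_id,
    LinearMap.toMatrix_comp bM bM' bM g f, LinearMap.toMatrix_comp bM' bM bM' f g,
    Matrix.det_one_sub_mul_comm]

/-- explicit inverse of `itilde`. -/
noncomputable def itinvdef (m : ℕ) (i : M ≃ₗ[S] M') :
    (Fin m → M) × M' →ₗ[S] (Fin (m + 1) → M) :=
  LinearMap.pi fun k : Fin (m + 1) =>
    Fin.cases (i.symm.toLinearMap ∘ₗ LinearMap.snd S (Fin m → M) M')
      (fun s => -(LinearMap.proj s ∘ₗ LinearMap.fst S (Fin m → M) M')) k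

/-- The nilpotent shift `N(x)_0 = 0`, `N(x)_{s+1} = j₀ x_s`. -/
noncomputable def Nshift (m : ℕ) (j₀ : M →ₗ[S] M) :
    (Fin (m + 1) → M) →ₗ[S] (Fin (m + 1) → M) :=
  LinearMap.pi fun k : Fin (m + 1) =>
    Fin.cases 0 (fun s => j₀ ∘ₗ LinearMap.proj s.castSucc) k

noncomputable def Cmap (m : ℕ) (i : M ≃ₗ[S] M') (j₀ : M →ₗ[S] M) :
    M' →ₗ[S] (Fin (m + 1) → M) :=
  LinearMap.pi fun k : Fin (m + 1) => (j₀ ^ (k : ℕ)) ∘ₗ i.symm.toLinearMap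

noncomputable def Amap (m : ℕ) (i : M ≃ₗ[S] M') : M' →ₗ[S] (Fin (m + 1) → M) :=
  LinearMap.pi fun k : Fin (m + 1) =>
    Fin.cases i.symm.toLinearMap (fun _ => 0) k

noncomputable def Bmap (m : ℕ) (j : Fin (m + 1) → M →ₗ[S] M') :
    (Fin (m + 1) → M) →ₗ[S] M' :=
  ∑ s : Fin (m + 1), (j s) ∘ₗ LinearMap.proj s

lemma itinv_comp_itilde (m : ℕ) (i : M ≃ₗ[S] M') :
    itinvdef m i ∘ₗ itilde m i.toLinearMap = LinearMap.id := by
  refine LinearMap.ext fun x => funext fun k => ?_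
  induction k using Fin.cases with
  | zero => simp [itinvdef, itilde]
  | succ s => simp [itinvdef, itilde]

lemma itilde_comp_itinv (m : ℕ) (i : M ≃ₗ[S] M') :
    itilde m i.toLinearMap ∘ₗ itinvdef m i = LinearMap.id := by
  refine LinearMap.ext fun p => ?_
  obtain ⟨y, y'⟩ := p
  refine Prod.ext (funext fun s => ?_) ?_
  · simp [itinvdef, itilde]
  · simp [itinvdef, itilde]

lemma key_decomp (m : ℕ) (i : M ≃ₗ[S] M') (j₀ : M →ₗ[S] M)
    (j : Fin (m + 1) → M →ₗ[S] M') :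
    itinvdef m i ∘ₗ jtilde m j₀ j = Nshift m j₀ + Amap m i ∘ₗ Bmap m j := by
  refine LinearMap.ext fun x => funext fun k => ?_
  induction k using Fin.cases with
  | zero =>
      simp [itinvdef, jtilde, Nshift, Amap, Bmap, LinearMap.sum_apply]
  | succ s =>
      simp [itinvdef, jtilde, Nshift, Amap, Bmap]

lemma N_C (m : ℕ) (i : M ≃ₗ[S] M') (j₀ : M →ₗ[S] M) :
    (LinearMap.id - Nshift m j₀) ∘ₗ Cmap m i j₀ = Amap m i := by
  refine LinearMap.ext fun y => funext fun k => ?_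
  induction k using Fin.cases with
  | zero => simp [Nshift, Cmap, Amap]
  | succ s =>
      simp [Nshift, Cmap, Amap]
      rw [pow_succ', Module.End.mul_apply, sub_self]

lemma B_C (m : ℕ) (i : M ≃ₗ[S] M') (j₀ : M →ₗ[S] M) (j : Fin (m + 1) → M →ₗ[S] M') :
    Bmap m j ∘ₗ Cmap m i j₀ = jsum m j₀ j ∘ₗ i.symm.toLinearMap := by
  refine LinearMap.ext fun y => ?_
  simp [Bmap, Cmap, jsum, LinearMap.sum_apply]

lemma Nshift_single_self (m : ℕ) (j₀ : M →ₗ[S] M) (k : Fin (m + 1)) (v : M) :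
    Nshift m j₀ (Pi.single k v) k = 0 := by
  induction k using Fin.cases with
  | zero => simp [Nshift]
  | succ s =>
      simp only [Nshift, LinearMap.pi_apply, Fin.cases_succ, LinearMap.comp_apply,
        LinearMap.proj_apply]
      rw [Pi.single_eq_of_ne (s.castSucc_lt_succ).ne, map_zero]

lemma Nshift_single_lt (m : ℕ) (j₀ : M →ₗ[S] M) (k l : Fin (m + 1)) (v : M)
    (h : k < l) : Nshift m j₀ (Pi.single l v) k = 0 := by
  induction k using Fin.cases with
  | zero => simp [Nshift]
  | succ s =>
      simp only [Nshift, LinearMap.pi_apply, Fin.cases_succ, LinearMap.comp_apply,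
        LinearMap.proj_apply]
      rw [Pi.single_eq_of_ne (by exact ((s.castSucc_lt_succ.trans h).ne)), map_zero]

lemma det_id_sub_Nshift (m : ℕ) (j₀ : M →ₗ[S] M) :
    LinearMap.det (LinearMap.id - Nshift m j₀) = 1 := by
  classical
  let b := Module.Free.chooseBasis S M
  let B : Module.Basis ((_ : Fin (m + 1)) × Module.Free.ChooseBasisIndex S M) S (Fin (m + 1) → M) :=
    Pi.basis fun _ => b
  rw [← LinearMap.det_toMatrix B]
  have htri : ((LinearMap.toMatrix B B (LinearMap.id - Nshift m j₀)).BlockTriangular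
      (fun p => OrderDual.toDual p.1)) := by
    rintro ⟨k, a⟩ ⟨l, c⟩ h
    have hkl : k < l := h
    rw [LinearMap.toMatrix_apply]
    simp only [LinearMap.sub_apply, LinearMap.id_apply, B, Pi.basis_apply, Pi.basis_repr]
    rw [Pi.sub_apply, Pi.single_eq_of_ne hkl.ne, Nshift_single_lt m j₀ k l _ hkl]
    simp
  rw [htri.det]
  apply Finset.prod_eq_one
  intro a _
  have : (LinearMap.toMatrix B B (LinearMap.id - Nshift m j₀)).toSquareBlock
      (fun p => OrderDual.toDual p.1) a = 1 := by
    ext ⟨⟨k, x⟩, hk⟩ ⟨⟨l, c⟩, hl⟩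
    have hkl : k = l := by
      have : OrderDual.toDual k = OrderDual.toDual l := hk.trans hl.symm
      exact congrArg OrderDual.ofDual this
    subst hkl
    simp only [Matrix.toSquareBlock_def, Matrix.of_apply, LinearMap.toMatrix_apply, B,
      Pi.basis_apply, Pi.basis_repr, LinearMap.sub_apply, LinearMap.id_apply, Pi.sub_apply]
    rw [Nshift_single_self, sub_zero, Pi.single_eq_same, Module.Basis.repr_self]
    rcases eq_or_ne x c with hxc | hxc
    · subst hxc
      simp [Matrix.one_apply]
    · rw [Finsupp.single_eq_of_ne hxc, Matrix.one_apply_ne ?_]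
      simp [Subtype.ext_iff, Sigma.ext_iff, hxc]
  rw [this, Matrix.det_one]

/-- if `M` and `M′` are finite free and `i : M ≃ M′` is an isomorphism,
then `ĩ : M^r → M^{r−1} × M′` is an isomorphism, and for any two-sided inverse `ĩ⁻¹`
of `ĩ` one has `det_S(id − ĩ⁻¹ ∘ j̃) = det_S(id − i⁻¹ ∘ j)` where
`j = Σ_{s=1}^r j_s ∘ j₀^{s−1}` (here `r = m + 1 ≥ 1`). -/
theorem stmt_5 (m : ℕ) (i : M ≃ₗ[S] M') (j₀ : M →ₗ[S] M)
    (j : Fin (m + 1) → M →ₗ[S] M') :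
    Function.Bijective (itilde m i.toLinearMap) ∧
    ∀ itinv : (Fin m → M) × M' →ₗ[S] (Fin (m + 1) → M),
      itinv ∘ₗ itilde m i.toLinearMap = LinearMap.id →
      itilde m i.toLinearMap ∘ₗ itinv = LinearMap.id →
      LinearMap.det (LinearMap.id - itinv ∘ₗ jtilde m j₀ j)
        = LinearMap.det (LinearMap.id - i.symm.toLinearMap ∘ₗ jsum m j₀ j) := by
  classical
  have h1 := itinv_comp_itilde m i
  have h2 := itilde_comp_itinv m i
  constructor
  · exact ⟨Function.LeftInverse.injective (g := itinvdef m i)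
      (fun x => LinearMap.congr_fun h1 x),
      Function.RightInverse.surjective (g := itinvdef m i)
      (fun x => LinearMap.congr_fun h2 x)⟩
  intro itinv hinv1 hinv2
  have hitinv : itinv = itinvdef m i := by
    calc itinv = itinv ∘ₗ (itilde m i.toLinearMap ∘ₗ itinvdef m i) := by
          rw [h2, LinearMap.comp_id]
      _ = (itinv ∘ₗ itilde m i.toLinearMap) ∘ₗ itinvdef m i := by
          rw [LinearMap.comp_assoc]
      _ = itinvdef m i := by rw [hinv1, LinearMap.id_comp]
  subst hitinv
  rw [key_decomp m i j₀ j]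
  have hfact : LinearMap.id - (Nshift m j₀ + Amap m i ∘ₗ Bmap m j)
      = (LinearMap.id - Nshift m j₀) ∘ₗ (LinearMap.id - Cmap m i j₀ ∘ₗ Bmap m j) := by
    rw [LinearMap.comp_sub, LinearMap.comp_id, ← LinearMap.comp_assoc,
      N_C m i j₀, sub_add_eq_sub_sub]
  rw [hfact, LinearMap.det_comp, det_id_sub_Nshift, one_mul]
  rw [det_id_sub_comp_comm (Bmap m j) (Cmap m i j₀), B_C]
  rw [det_id_sub_comp_comm i.symm.toLinearMap (jsum m j₀ j)]

end
end

section
/- In the polynomial ring S[T], one has det_{S[T]}(id − T·(ĩ⁻¹ ∘ j̃)_{S[T]}) = det_{S[T]}(id − Σ_{s=1}^r T^s·(i⁻¹ ∘ j_s ∘ j₀^{s−1})_{S[T]}), where for an S-linear endomorphism f of a finite free S-module V, f_{S[T]} denotes its base change to an S[T]-linear endomorphism of V ⊗_S S[T]; the left-hand side is a determinant of an endomorphism of M^r ⊗_S S[T] and the right-hand side of an endomorphism of M ⊗_S S[T]. -/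
open TensorProduct

open Matrix

/-- Block companion matrix: block row 0 is `C 0, C 1, …, C r`, and block `(k+1, k)` is `D`. -/
def blockComp {R ι : Type*} [CommRing R] [Fintype ι]
    (r : ℕ) (C : Fin (r + 1) → Matrix ι ι R) (D : Matrix ι ι R) :
    Matrix (Fin (r + 1) × ι) (Fin (r + 1) × ι) R :=
  Matrix.of fun p q =>
    (if p.1 = 0 then C q.1 p.2 q.2 else 0) +
    (if (q.1 : ℕ) + 1 = (p.1 : ℕ) then D p.2 q.2 else 0)

/-- Equiv splitting off the last block. -/
def splitLast (r : ℕ) (ι : Type*) : ((Fin (r + 1) × ι) ⊕ ι) ≃ (Fin (r + 2) × ι) where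
  toFun x := x.elim (fun p => (p.1.castSucc, p.2)) (fun a => (Fin.last (r + 1), a))
  invFun p := if h : (p.1 : ℕ) < r + 1 then Sum.inl (⟨p.1, h⟩, p.2) else Sum.inr p.2
  left_inv x := by
    rcases x with ⟨p, a⟩ | a
    · simp [Fin.is_lt]
      exact dif_pos p.is_lt
    · simp
  right_inv p := by
    by_cases h : (p.1 : ℕ) < r + 1
    · simp [h]
    · have hp : p.1 = Fin.last (r + 1) := by
        have := p.1.is_lt; ext; simp only [Fin.val_last]; omega
      simp only [h, dif_neg, not_false_iff]
      exact Prod.ext hp.symm rfl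

theorem det_one_sub_blockComp {R ι : Type*} [CommRing R] [Fintype ι] [DecidableEq ι] :
    ∀ (r : ℕ) (C : Fin (r + 1) → Matrix ι ι R) (D : Matrix ι ι R),
    (1 - blockComp r C D).det = (1 - ∑ s : Fin (r + 1), C s * D ^ (s : ℕ)).det := by
  intro r
  induction r with
  | zero =>
    intro C D
    have hs : ∑ s : Fin 1, C s * D ^ (s : ℕ) = C 0 := by
      rw [Fin.sum_univ_one]
      norm_num
    rw [hs]
    rw [← Matrix.det_submatrix_equiv_self
        (⟨fun a => ((0 : Fin 1), a), Prod.snd, fun a => rfl,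
          fun p => Prod.ext (Subsingleton.elim _ _) rfl⟩ : ι ≃ Fin 1 × ι)
        (1 - blockComp 0 C D)]
    congr 1
    ext a b
    simp [blockComp, Matrix.one_apply, Prod.ext_iff, Fin.ext_iff]
  | succ r IH =>
    intro C D
    set CL : Matrix ι ι R := C (Fin.last (r + 1)) with hCL
    set B : Matrix (Fin (r + 1) × ι) ι R :=
      Matrix.of (fun p a => if p.1 = 0 then -(CL p.2 a) else 0) with hB
    set Cb : Matrix ι (Fin (r + 1) × ι) R :=
      Matrix.of (fun a q => if q.1 = Fin.last r then -(D a q.2) else 0) with hCb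
    set A : Matrix (Fin (r + 1) × ι) (Fin (r + 1) × ι) R :=
      1 - blockComp r (fun s => C s.castSucc) D with hA
    have key : (1 - blockComp (r + 1) C D).submatrix (splitLast r ι) (splitLast r ι) =
        Matrix.fromBlocks A B Cb 1 := by
      ext x y
      rcases x with ⟨p, a⟩ | a <;> rcases y with ⟨q, b⟩ | b
      · have h1 : ((p.castSucc, a) = (q.castSucc, b)) ↔ ((p, a) = (q, b)) := by
          simp [Prod.ext_iff, Fin.ext_iff]
        simp only [Matrix.submatrix_apply, splitLast, Equiv.coe_fn_mk, Sum.elim_inl,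
          Matrix.fromBlocks_apply₁₁, hA, Matrix.sub_apply, Matrix.one_apply, h1, blockComp,
          Matrix.of_apply, Fin.coe_castSucc]
        congr 2
        simp only [Fin.castSucc_eq_zero_iff]
      · have hne : ((p.castSucc, a) = (Fin.last (r + 1), b)) ↔ False := by
          simp only [Prod.ext_iff, Fin.ext_iff, Fin.coe_castSucc, Fin.val_last, iff_false,
            not_and]
          intro h
          exact absurd h (by omega)
        have hsub : ¬ ((Fin.last (r + 1) : Fin (r + 2)) : ℕ) + 1 = (p.castSucc : ℕ) := by
          simp only [Fin.val_last, Fin.coe_castSucc]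
          omega
        simp only [Matrix.submatrix_apply, splitLast, Equiv.coe_fn_mk, Sum.elim_inl,
          Sum.elim_inr, Matrix.fromBlocks_apply₁₂, Matrix.sub_apply, Matrix.one_apply,
          hne, if_false, blockComp, Matrix.of_apply, hsub, hB]
        by_cases hp : p = 0
        · simp [hp, Fin.ext_iff, hCL]
        · have : ¬ (p.castSucc = (0 : Fin (r + 2))) := by
            simp only [Fin.ext_iff, Fin.coe_castSucc, Fin.val_zero]
            exact fun h => hp (Fin.ext h)
          simp [hp, this]
      · have hne : ((Fin.last (r + 1), a) = (q.castSucc, b)) ↔ False := by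
          simp only [Prod.ext_iff, Fin.ext_iff, Fin.coe_castSucc, Fin.val_last, iff_false,
            not_and]
          intro h
          exact absurd h (by omega)
        have h0 : ¬ ((Fin.last (r + 1) : Fin (r + 2)) = 0) := by
          simp [Fin.ext_iff]
        have hsub : (((q.castSucc : Fin (r + 2)) : ℕ) + 1 = ((Fin.last (r + 1)) : ℕ)) ↔
            (q = Fin.last r) := by
          simp only [Fin.coe_castSucc, Fin.val_last, Fin.ext_iff]
          omega
        simp only [Matrix.submatrix_apply, splitLast, Equiv.coe_fn_mk, Sum.elim_inl,
          Sum.elim_inr, Matrix.fromBlocks_apply₂₁, Matrix.sub_apply, Matrix.one_apply,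
          hne, if_false, blockComp, Matrix.of_apply, h0, hsub, hCb]
        by_cases hq : q = Fin.last r <;> simp [hq]
      · have h0 : ¬ ((Fin.last (r + 1) : Fin (r + 2)) = 0) := by
          simp [Fin.ext_iff]
        have hsub : ¬ (((Fin.last (r + 1) : Fin (r + 2)) : ℕ) + 1 =
            ((Fin.last (r + 1)) : ℕ)) := by simp
        simp only [Matrix.submatrix_apply, splitLast, Equiv.coe_fn_mk, Sum.elim_inr,
          Matrix.fromBlocks_apply₂₂, Matrix.sub_apply, Matrix.one_apply, blockComp,
          Matrix.of_apply, h0, hsub, if_false, Prod.ext_iff]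
        simp [Matrix.one_apply, Prod.ext_iff]
    rw [← Matrix.det_submatrix_equiv_self (splitLast r ι) (1 - blockComp (r + 1) C D), key,
      Matrix.det_fromBlocks_one₂₂]
    have hABC : A - B * Cb =
        1 - blockComp r (fun s => C s.castSucc + if s = Fin.last r then CL * D else 0) D := by
      ext ⟨p, a⟩ ⟨q, b⟩
      have hmul : (B * Cb) (p, a) (q, b) =
          if p = 0 ∧ q = Fin.last r then (CL * D) a b else 0 := by
        simp only [Matrix.mul_apply, hB, hCb, Matrix.of_apply]
        by_cases hp : p = 0 <;> by_cases hq : q = Fin.last r <;>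
          simp [hp, hq, Matrix.mul_apply, neg_mul_neg]
      simp only [Matrix.sub_apply, hmul, hA, blockComp, Matrix.of_apply, Matrix.add_apply]
      by_cases hp : p = 0 <;> by_cases hq : q = Fin.last r <;> simp [hp, hq] <;> ring
    rw [hABC, IH]
    congr 1
    have hsum : ∑ s : Fin (r + 1),
        (C s.castSucc + if s = Fin.last r then CL * D else 0) * D ^ (s : ℕ) =
        ∑ s : Fin (r + 2), C s * D ^ (s : ℕ) := by
      rw [Fin.sum_univ_castSucc (f := fun s : Fin (r + 2) => C s * D ^ (s : ℕ))]
      simp only [add_mul, Finset.sum_add_distrib, ite_mul, zero_mul]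
      rw [Finset.sum_ite_eq' Finset.univ (Fin.last r)
        (fun s : Fin (r + 1) => CL * D * D ^ (s : ℕ))]
      simp [hCL, Fin.val_last, mul_assoc, ← pow_succ']
    rw [hsum]

section

variable {S M M' : Type*} [CommRing S] [AddCommGroup M] [Module S M]
  [AddCommGroup M'] [Module S M'] [Module.Free S M] [Module.Finite S M]
  [Module.Free S M'] [Module.Finite S M']

/-- The block companion endomorphism of `M^(m+1)`. -/
noncomputable def compMap {R V : Type*} [CommRing R] [AddCommGroup V] [Module R V]
    (m : ℕ) (c : Fin (m + 1) → (V →ₗ[R] V)) (d : V →ₗ[R] V) :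
    (Fin (m + 1) → V) →ₗ[R] (Fin (m + 1) → V) :=
  LinearMap.pi fun k =>
    Fin.cases (∑ s, c s ∘ₗ LinearMap.proj s)
      (fun k' => d ∘ₗ LinearMap.proj k'.castSucc) k

theorem itilde_comp_compMap (m : ℕ) (i : M ≃ₗ[S] M') (j₀ : M →ₗ[S] M)
    (j : Fin (m + 1) → M →ₗ[S] M') :
    itilde m i.toLinearMap ∘ₗ compMap m (fun s => i.symm.toLinearMap ∘ₗ j s) j₀ =
      jtilde m j₀ j := by
  apply LinearMap.ext
  intro x
  have hzero : (compMap m (fun s => i.symm.toLinearMap ∘ₗ j s) j₀ x) 0 =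
      ∑ s, i.symm (j s (x s)) := by
    simp [compMap]
  have hsucc : ∀ k : Fin m, (compMap m (fun s => i.symm.toLinearMap ∘ₗ j s) j₀ x) k.succ =
      j₀ (x k.castSucc) := by
    intro k
    simp [compMap]
  refine Prod.ext ?_ ?_
  · funext k
    simp [itilde, jtilde, hsucc k]
  · simp [itilde, jtilde, hzero, map_sum]

theorem toMatrix_compMap {R V ι : Type*} [CommRing R] [AddCommGroup V] [Module R V]
    [Fintype ι] [DecidableEq ι] (b : Module.Basis ι R V)
    (m : ℕ) (c : Fin (m + 1) → (V →ₗ[R] V)) (d : V →ₗ[R] V) :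
    LinearMap.toMatrix
      ((Pi.basis fun _ : Fin (m + 1) => b).reindex (Equiv.sigmaEquivProd (Fin (m + 1)) ι))
      ((Pi.basis fun _ : Fin (m + 1) => b).reindex (Equiv.sigmaEquivProd (Fin (m + 1)) ι))
      (compMap m c d) =
    blockComp m (fun s => LinearMap.toMatrix b b (c s)) (LinearMap.toMatrix b b d) := by
  ext ⟨p1, p2⟩ ⟨q1, q2⟩
  rw [LinearMap.toMatrix_apply, Module.Basis.reindex_apply, Module.Basis.repr_reindex_apply]
  have hq : (Equiv.sigmaEquivProd (Fin (m + 1)) ι).symm (q1, q2) = ⟨q1, q2⟩ := rfl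
  have hp : (Equiv.sigmaEquivProd (Fin (m + 1)) ι).symm (p1, p2) = ⟨p1, p2⟩ := rfl
  rw [hq, hp, Pi.basis_apply, Pi.basis_repr]
  induction p1 using Fin.cases with
  | zero =>
    have : (compMap m c d (Pi.single q1 (b q2))) 0 = c q1 (b q2) := by
      simp only [compMap, LinearMap.pi_apply, Fin.cases_zero, LinearMap.sum_apply,
        LinearMap.comp_apply, LinearMap.proj_apply]
      rw [Finset.sum_eq_single q1]
      · simp
      · intro s _ hs
        rw [Pi.single_eq_of_ne hs, map_zero]
      · simp
    rw [this]
    simp [blockComp, LinearMap.toMatrix_apply]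
  | succ k =>
    have : (compMap m c d (Pi.single q1 (b q2))) k.succ =
        if q1 = k.castSucc then d (b q2) else 0 := by
      simp only [compMap, LinearMap.pi_apply, Fin.cases_succ, LinearMap.comp_apply,
        LinearMap.proj_apply]
      by_cases h : q1 = k.castSucc
      · rw [if_pos h, ← h, Pi.single_eq_same]
      · rw [if_neg h, Pi.single_eq_of_ne (fun hc => h hc.symm), map_zero]
    rw [this]
    have hcond : ((q1 : ℕ) = (k : ℕ)) ↔ q1 = k.castSucc := by
      simp only [Fin.ext_iff, Fin.coe_castSucc]
    have h0 : ¬ ((k.succ : Fin (m + 1)) = 0) := Fin.succ_ne_zero k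
    simp only [blockComp, Matrix.of_apply, h0, if_false, zero_add, Fin.val_succ,
      add_left_inj, hcond]
    by_cases h : q1 = k.castSucc <;> simp [h, LinearMap.toMatrix_apply]

theorem smul_map_blockComp {R A ι : Type*} [CommRing R] [CommRing A] [Algebra R A]
    [Fintype ι] (m : ℕ) (C : Fin (m + 1) → Matrix ι ι R) (D : Matrix ι ι R) (x : A) :
    x • (blockComp m C D).map (algebraMap R A) =
      blockComp m (fun s => x • (C s).map (algebraMap R A)) (x • D.map (algebraMap R A)) := by
  ext ⟨p1, p2⟩ ⟨q1, q2⟩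
  simp only [Matrix.smul_apply, blockComp, Matrix.of_apply, Matrix.map_apply, map_add,
    apply_ite (algebraMap R A), map_zero, smul_eq_mul, mul_add, mul_ite, mul_zero]

theorem toMatrix_pow' {R V ι : Type*} [CommRing R] [AddCommGroup V] [Module R V]
    [Fintype ι] [DecidableEq ι] (b : Module.Basis ι R V) (g : V →ₗ[R] V) (n : ℕ) :
    LinearMap.toMatrix b b (g ^ n) = (LinearMap.toMatrix b b g) ^ n := by
  induction n with
  | zero =>
    rw [pow_zero, pow_zero]
    exact LinearMap.toMatrix_one b
  | succ n IH =>
    rw [pow_succ, pow_succ, ← IH, Module.End.mul_eq_comp, LinearMap.toMatrix_comp b b b]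

theorem matrix_map_pow {R A ι : Type*} [CommRing R] [CommRing A] [Fintype ι] [DecidableEq ι]
    (φ : R →+* A) (M : Matrix ι ι R) (n : ℕ) :
    (M ^ n).map φ = (M.map φ) ^ n := by
  simpa [RingHom.mapMatrix_apply] using map_pow φ.mapMatrix M n

set_option synthInstance.maxHeartbeats 1000000 in
set_option maxHeartbeats 1000000 in
/-- with `M`, `M′` finite free and `i : M ≃ M′` an isomorphism, in `S[T]`
one has `det_{S[T]}(id − T·(ĩ⁻¹ ∘ j̃)_{S[T]}) =
det_{S[T]}(id − Σ_{s=1}^r T^s·(i⁻¹ ∘ j_s ∘ j₀^{s−1})_{S[T]})`, where `f_{S[T]}` denotes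
the base change of an `S`-linear endomorphism `f` to `S[T] ⊗_S V` (here `r = m + 1 ≥ 1`
and `ĩ⁻¹` is any two-sided inverse of `ĩ`). -/
theorem stmt_6 (m : ℕ) (i : M ≃ₗ[S] M') (j₀ : M →ₗ[S] M)
    (j : Fin (m + 1) → M →ₗ[S] M')
    (itinv : (Fin m → M) × M' →ₗ[S] (Fin (m + 1) → M))
    (h1 : itinv ∘ₗ itilde m i.toLinearMap = LinearMap.id)
    (h2 : itilde m i.toLinearMap ∘ₗ itinv = LinearMap.id) :
    LinearMap.det (LinearMap.id - (Polynomial.X : Polynomial S) •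
        LinearMap.baseChange (Polynomial S) (itinv ∘ₗ jtilde m j₀ j))
      = LinearMap.det (LinearMap.id - ∑ s : Fin (m + 1),
          ((Polynomial.X : Polynomial S) ^ ((s : ℕ) + 1)) •
            LinearMap.baseChange (Polynomial S)
              (i.symm.toLinearMap ∘ₗ j s ∘ₗ (j₀ ^ (s : ℕ)))) := by
  classical
  let ι := Module.Free.ChooseBasisIndex S M
  let b : Module.Basis ι S M := Module.Free.chooseBasis S M
  let bP : Module.Basis (Fin (m + 1) × ι) S (Fin (m + 1) → M) :=
    (Pi.basis fun _ : Fin (m + 1) => b).reindex (Equiv.sigmaEquivProd (Fin (m + 1)) ι)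
  let BP := Algebra.TensorProduct.basis (Polynomial S) bP
  let B := Algebra.TensorProduct.basis (Polynomial S) b
  let K := compMap m (fun s => i.symm.toLinearMap ∘ₗ j s) j₀
  have hK : itinv ∘ₗ jtilde m j₀ j = K := by
    rw [← itilde_comp_compMap m i j₀ j, ← LinearMap.comp_assoc, h1, LinearMap.id_comp]
  have hL : LinearMap.toMatrix BP BP (LinearMap.id - (Polynomial.X : Polynomial S) •
      LinearMap.baseChange (Polynomial S) K) =
      1 - (Polynomial.X : Polynomial S) •
        (LinearMap.toMatrix bP bP K).map (algebraMap S (Polynomial S)) := by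
    rw [map_sub (LinearMap.toMatrix BP BP) LinearMap.id
        ((Polynomial.X : Polynomial S) • LinearMap.baseChange (Polynomial S) K),
      _root_.map_smul, LinearMap.toMatrix_id, LinearMap.toMatrix_baseChange]
  have hRm : LinearMap.toMatrix B B (LinearMap.id - ∑ s : Fin (m + 1),
      ((Polynomial.X : Polynomial S) ^ ((s : ℕ) + 1)) •
        LinearMap.baseChange (Polynomial S)
          (i.symm.toLinearMap ∘ₗ j s ∘ₗ (j₀ ^ (s : ℕ)))) =
      1 - ∑ s : Fin (m + 1), ((Polynomial.X : Polynomial S) ^ ((s : ℕ) + 1)) •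
        (LinearMap.toMatrix b b
          (i.symm.toLinearMap ∘ₗ j s ∘ₗ (j₀ ^ (s : ℕ)))).map (algebraMap S (Polynomial S)) := by
    rw [map_sub (LinearMap.toMatrix B B) LinearMap.id
        (∑ s : Fin (m + 1), ((Polynomial.X : Polynomial S) ^ ((s : ℕ) + 1)) •
          LinearMap.baseChange (Polynomial S)
            (i.symm.toLinearMap ∘ₗ j s ∘ₗ (j₀ ^ (s : ℕ)))),
      map_sum (LinearMap.toMatrix B B) _ Finset.univ, LinearMap.toMatrix_id]
    congr 1
    refine Finset.sum_congr rfl fun s _ => ?_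
    rw [_root_.map_smul, LinearMap.toMatrix_baseChange]
  rw [hK, ← LinearMap.det_toMatrix BP, ← LinearMap.det_toMatrix B, hL, hRm,
    toMatrix_compMap b m (fun s => i.symm.toLinearMap ∘ₗ j s) j₀, smul_map_blockComp,
    det_one_sub_blockComp]
  congr 2
  refine Finset.sum_congr rfl fun s _ => ?_
  have hcomp : LinearMap.toMatrix b b (i.symm.toLinearMap ∘ₗ j s ∘ₗ (j₀ ^ (s : ℕ))) =
      LinearMap.toMatrix b b (i.symm.toLinearMap ∘ₗ j s) *
        (LinearMap.toMatrix b b j₀) ^ (s : ℕ) := by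
    rw [← LinearMap.comp_assoc, LinearMap.toMatrix_comp b b b, toMatrix_pow']
  rw [hcomp, smul_pow, Algebra.mul_smul_comm, Algebra.smul_mul_assoc, smul_smul,
    ← pow_succ, Matrix.map_mul, matrix_map_pow]

end
end
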